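/- Under the assumptions ω_i(x_0) ∈ ℝ for all i, M = max_{1≤i≤s−1}ω_i(x_0) < 1, 0 < mp ≤ 1/2, and n ≥ 4, the variance of Q = (1/n)∑_j ω_1(x_j) under the N-step distribution ν_N satisfies V_{ν_N}(Q) ≤ 1/n for every N ≥ 0. -/

import Mathlib

open scoped BigOperators

attribute [local instance] Classical.propDecidable

noncomputable def avgIdem (K : Type) [Group K] [Fintype K] (L : Subgroup K) :
    MonoidAlgebra ℂ K :=
  (Fintype.card L : ℂ)⁻¹ • ∑ h : L, MonoidAlgebra.of ℂ K (h : K)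

/-- `(K, L)` is a Gelfand pair: the Hecke algebra `e_L ℂK e_L` is commutative. -/
def IsGelfandPair (K : Type) [Group K] [Fintype K] (L : Subgroup K) : Prop :=
  ∀ x y : MonoidAlgebra ℂ K,
    (avgIdem K L * x * avgIdem K L) * (avgIdem K L * y * avgIdem K L) =
      (avgIdem K L * y * avgIdem K L) * (avgIdem K L * x * avgIdem K L)

/-- `ω` is a zonal spherical function of the pair `(K, L)`:
normalized, bi-`L`-invariant, and satisfying the spherical functional equation. -/
def IsZSF (K : Type) [Group K] [Fintype K] (L : Subgroup K) (ω : K → ℂ) : Prop :=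
  ω 1 = 1 ∧
    (∀ g : K, ∀ h ∈ L, ∀ h' ∈ L, ω (h * g * h') = ω g) ∧
    ∀ x y : K, (Fintype.card L : ℂ)⁻¹ * ∑ h : L, ω (x * (h : K) * y) = ω x * ω y

/-- the double coset `L x₀ L` as a set -/
def dcoset (K : Type) [Group K] (L : Subgroup K) (x₀ : K) : Set K :=
  {g : K | ∃ a ∈ L, ∃ b ∈ L, g = a * x₀ * b}

/-- one-step transition probability of the interacting urn model on `(K ⧸ L)^n` -/
noncomputable def step (K : Type) [Group K] [Fintype K] (L : Subgroup K) (x₀ : K)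
    (n m : ℕ) (p : ℝ) (x y : Fin n → K ⧸ L) : ℝ :=
  if x = y then 1 - m * p
  else if ∃ j : Fin n, (∀ i : Fin n, i ≠ j → x i = y i) ∧
      (x j).out⁻¹ * (y j).out ∈ dcoset K L x₀ then p / n
  else 0

/-- the transition matrix `P_{(K,L;n)}` (real version) -/
noncomputable def PmatR (K : Type) [Group K] [Fintype K] (L : Subgroup K) (x₀ : K)
    (n m : ℕ) (p : ℝ) : Matrix (Fin n → K ⧸ L) (Fin n → K ⧸ L) ℝ :=
  Matrix.of fun x y => step K L x₀ n m p x y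

/-- the transition matrix `P_{(K,L;n)}` (complex version) -/
noncomputable def PmatC (K : Type) [Group K] [Fintype K] (L : Subgroup K) (x₀ : K)
    (n m : ℕ) (p : ℝ) : Matrix (Fin n → K ⧸ L) (Fin n → K ⧸ L) ℂ :=
  Matrix.of fun x y => (step K L x₀ n m p x y : ℂ)

/-- the initial state `ē = (L, …, L)` -/
def eQ (K : Type) [Group K] (L : Subgroup K) (n : ℕ) : Fin n → K ⧸ L :=
  fun _ => ((1 : K) : K ⧸ L)

section ZSF
variable {K : Type} [Group K] [Fintype K] {L : Subgroup K} {ω : K → ℂ} (hz : IsZSF K L ω)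
include hz

lemma zsf_right {g l : K} (hl : l ∈ L) : ω (g * l) = ω g := by
  have := hz.2.1 g 1 L.one_mem l hl; simpa using this

lemma zsf_out (g : K) : ω ((g : K ⧸ L)).out = ω g := by
  have h1 : ((((g : K ⧸ L)).out : K) : K ⧸ L) = (g : K ⧸ L) := Quotient.out_eq _
  have h2 : g⁻¹ * ((g : K ⧸ L)).out ∈ L := QuotientGroup.eq.mp h1.symm
  have : ((g : K ⧸ L)).out = g * (g⁻¹ * ((g : K ⧸ L)).out) := by group
  rw [this, zsf_right hz h2]

lemma zsf_abs_le_one (g : K) : ‖ω g‖ ≤ 1 := by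
  obtain ⟨g₀, -, hg₀⟩ := Finset.exists_max_image Finset.univ (fun k => ‖ω k‖)
    ⟨1, Finset.mem_univ 1⟩
  have h1 : (1 : ℝ) ≤ ‖ω g₀‖ := by
    have := hg₀ 1 (Finset.mem_univ 1); rwa [hz.1, norm_one] at this
  have hfe := hz.2.2 g₀ g
  have hcard : (0 : ℝ) < Fintype.card L := by positivity
  have habs : ‖ω g₀‖ * ‖ω g‖ ≤ ‖ω g₀‖ := by
    calc ‖ω g₀‖ * ‖ω g‖ = ‖ω g₀ * ω g‖ := (norm_mul _ _).symm
    _ = ‖(Fintype.card L : ℂ)⁻¹ * ∑ h : L, ω (g₀ * (h : K) * g)‖ := by rw [hfe]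
    _ = (Fintype.card L : ℝ)⁻¹ * ‖∑ h : L, ω (g₀ * (h : K) * g)‖ := by
        rw [norm_mul, norm_inv]; norm_num
    _ ≤ (Fintype.card L : ℝ)⁻¹ * ∑ h : L, ‖ω (g₀ * (h : K) * g)‖ := by
        have := norm_sum_le (Finset.univ : Finset L) (fun h => ω (g₀ * (h : K) * g))
        exact mul_le_mul_of_nonneg_left this (by positivity)
    _ ≤ (Fintype.card L : ℝ)⁻¹ * ∑ h : L, ‖ω g₀‖ := by
        gcongr with h; exact hg₀ _ (Finset.mem_univ _)
    _ = ‖ω g₀‖ := by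
        rw [Finset.sum_const, Finset.card_univ, nsmul_eq_mul]
        field_simp
  nlinarith [habs, h1]

end ZSF

section Dc
variable {K : Type} [Group K] [Fintype K] (L : Subgroup K) (x₀ : K)

noncomputable def Dfin : Finset K :=
  Finset.image (fun q : L × L => (q.1 : K) * x₀ * (q.2 : K)) Finset.univ

lemma mem_Dfin {k : K} : k ∈ Dfin L x₀ ↔ k ∈ dcoset K L x₀ := by
  simp only [Dfin, Finset.mem_image, Finset.mem_univ, true_and, dcoset, Set.mem_setOf_eq]
  constructor
  · rintro ⟨⟨a, b⟩, rfl⟩; exact ⟨a, a.2, b, b.2, rfl⟩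
  · rintro ⟨a, ha, b, hb, rfl⟩; exact ⟨⟨⟨a, ha⟩, ⟨b, hb⟩⟩, rfl⟩

lemma Dfin_rstable {k l : K} (hk : k ∈ Dfin L x₀) (hl : l ∈ L) : k * l ∈ Dfin L x₀ := by
  rw [mem_Dfin] at hk ⊢
  obtain ⟨a, ha, b, hb, rfl⟩ := hk
  exact ⟨a, ha, b * l, L.mul_mem hb hl, by group⟩

lemma Dfin_card {m : ℕ} (hm : m * Nat.card L = Nat.card (dcoset K L x₀)) :
    (Dfin L x₀).card = m * Fintype.card L := by
  have h1 : dcoset K L x₀ = (↑(Dfin L x₀) : Set K) := by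
    ext k; rw [Finset.mem_coe, mem_Dfin]
  have h2 : Nat.card (dcoset K L x₀) = (Dfin L x₀).card := by
    rw [h1, Nat.card_coe_set_eq, Set.ncard_coe_finset]
  rw [← h2, ← hm, Nat.card_eq_fintype_card]

noncomputable def tfib : ℕ :=
  (Finset.univ.filter (fun q : L × L => (q.1 : K) * x₀ * (q.2 : K) = x₀)).card

lemma fiber_const {u : K} (hu : u ∈ Dfin L x₀) :
    (Finset.univ.filter (fun q : L × L => (q.1 : K) * x₀ * (q.2 : K) = u)).card = tfib L x₀ := by
  simp only [Dfin, Finset.mem_image, Finset.mem_univ, true_and] at hu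
  obtain ⟨q₀, hq₀⟩ := hu
  apply Finset.card_nbij' (fun q => (q₀.1⁻¹ * q.1, q.2 * q₀.2⁻¹))
    (fun q => (q₀.1 * q.1, q.2 * q₀.2))
  · intro q hq
    simp only [Finset.coe_filter, Finset.mem_coe, Set.mem_setOf_eq, Finset.mem_filter, Finset.mem_univ, true_and] at hq ⊢
    push_cast
    rw [← hq₀] at hq
    have : (q.1 : K) * x₀ * q.2 = (q₀.1 : K) * x₀ * q₀.2 := hq
    calc ((q₀.1 : K))⁻¹ * (q.1:K) * x₀ * ((q.2:K) * ((q₀.2:K))⁻¹)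
        = ((q₀.1 : K))⁻¹ * ((q.1 : K) * x₀ * q.2) * ((q₀.2:K))⁻¹ := by group
      _ = ((q₀.1 : K))⁻¹ * ((q₀.1 : K) * x₀ * q₀.2) * ((q₀.2:K))⁻¹ := by rw [this]
      _ = x₀ := by group
  · intro q hq
    simp only [Finset.coe_filter, Finset.mem_coe, Set.mem_setOf_eq, Finset.mem_filter, Finset.mem_univ, true_and] at hq ⊢
    push_cast
    have : (q.1 : K) * x₀ * q.2 = x₀ := hq
    calc (q₀.1 : K) * (q.1 : K) * x₀ * ((q.2:K) * q₀.2)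
        = (q₀.1 : K) * ((q.1:K) * x₀ * q.2) * q₀.2 := by group
      _ = u := by rw [this, ← hq₀]
  · intro q _; ext <;> simp [mul_assoc]
  · intro q _; ext <;> simp [← mul_assoc]

lemma tfib_mul_m {m : ℕ} (hm : m * Nat.card L = Nat.card (dcoset K L x₀)) :
    tfib L x₀ * m = Fintype.card L := by
  have h1 : (Finset.univ : Finset (L × L)).card =
      ∑ u ∈ Dfin L x₀, (Finset.univ.filter
        (fun q : L × L => (q.1 : K) * x₀ * (q.2 : K) = u)).card :=
    Finset.card_eq_sum_card_fiberwise (fun q _ => by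
      simp only [Finset.mem_coe, Dfin, Finset.mem_image, Finset.mem_univ, true_and]; exact ⟨q, rfl⟩)
  rw [Finset.sum_congr rfl (fun u hu => fiber_const L x₀ hu), Finset.sum_const,
    smul_eq_mul, Dfin_card L x₀ hm] at h1
  simp only [Finset.card_univ, Fintype.card_prod] at h1
  have hc : 0 < Fintype.card L := Fintype.card_pos
  have h3 : Fintype.card L * Fintype.card L = Fintype.card L * (tfib L x₀ * m) := by
    rw [h1]; ring
  exact (Nat.eq_of_mul_eq_mul_left hc h3).symm

end Dc

section Key
variable {K : Type} [Group K] [Fintype K] {L : Subgroup K} {x₀ : K} {m : ℕ}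
  (hm : m * Nat.card L = Nat.card (dcoset K L x₀))

-- double sum over L × L of any function of the product
lemma sum_pairs (φ : K → ℂ) (g : K) :
    ∑ q : L × L, φ (g * ((q.1 : K) * x₀ * (q.2 : K)))
      = (tfib L x₀ : ℂ) * ∑ u ∈ Dfin L x₀, φ (g * u) := by
  have := Finset.sum_comp (s := (Finset.univ : Finset (L × L)))
    (fun u => φ (g * u)) (fun q : L × L => (q.1 : K) * x₀ * (q.2 : K))
  have himg : Finset.image (fun q : L × L => (q.1 : K) * x₀ * (q.2 : K)) Finset.univ
      = Dfin L x₀ := rfl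
  rw [this, himg, Finset.sum_congr rfl (fun u hu => by
    rw [fiber_const L x₀ (by simpa [Dfin] using hu)]), ← Finset.smul_sum, nsmul_eq_mul]

include hm in
lemma sum_Dfin_zsf {ω : K → ℂ} (hz : IsZSF K L ω) (g : K) :
    ∑ u ∈ Dfin L x₀, ω (g * u) = (m : ℂ) * (Fintype.card L : ℂ) * (ω g * ω x₀) := by
  have h1 : ∑ q : L × L, ω (g * ((q.1 : K) * x₀ * (q.2 : K)))
      = (Fintype.card L : ℂ) * (Fintype.card L : ℂ) * (ω g * ω x₀) := by
    rw [Fintype.sum_prod_type]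
    have hinner : ∀ h : L, ∑ h' : L, ω (g * ((h : K) * x₀ * (h' : K)))
        = (Fintype.card L : ℂ) * ω (g * (h : K) * x₀) := by
      intro h
      rw [Finset.sum_congr rfl (fun h' _ => by
        rw [show g * ((h : K) * x₀ * (h' : K)) = (g * (h:K) * x₀) * (h' : K) by group,
          zsf_right hz h'.2])]
      simp [Finset.sum_const, Finset.card_univ, nsmul_eq_mul]
    rw [Finset.sum_congr rfl (fun h _ => hinner h), ← Finset.mul_sum]
    have hfe := hz.2.2 g x₀
    have hc : (Fintype.card L : ℂ) ≠ 0 := Nat.cast_ne_zero.mpr Fintype.card_ne_zero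
    field_simp at hfe
    rw [hfe]; ring
  rw [sum_pairs] at h1
  have ht : tfib L x₀ * m = Fintype.card L := tfib_mul_m L x₀ hm
  have htpos : tfib L x₀ ≠ 0 := by
    intro h0; rw [h0] at ht; simp at ht
    exact Fintype.card_ne_zero ht.symm
  have htc : (tfib L x₀ : ℂ) ≠ 0 := Nat.cast_ne_zero.mpr htpos
  have : (tfib L x₀ : ℂ) * ∑ u ∈ Dfin L x₀, ω (g * u)
      = (tfib L x₀ : ℂ) * ((m : ℂ) * (Fintype.card L : ℂ) * (ω g * ω x₀)) := by
    rw [h1, ← ht]; push_cast; ring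
  exact mul_left_cancel₀ htc this

lemma mem_E_iff {g k : K} :
    k ∈ (Dfin L x₀).image (fun u => g * u) ↔ g⁻¹ * k ∈ Dfin L x₀ := by
  simp only [Finset.mem_image]
  constructor
  · rintro ⟨u, hu, rfl⟩; simpa [← mul_assoc] using hu
  · intro h; exact ⟨g⁻¹ * k, h, by group⟩

lemma coset_sum (φ : K → ℂ) (hφ : ∀ k l, l ∈ L → φ (k * l) = φ k) (g : K) :
    (Fintype.card L : ℂ) * ∑ c ∈ Finset.univ.filter
        (fun c : K ⧸ L => g⁻¹ * c.out ∈ dcoset K L x₀), φ c.out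
      = ∑ u ∈ Dfin L x₀, φ (g * u) := by
  classical
  set E := (Dfin L x₀).image (fun u => g * u) with hE
  have h1 : ∑ u ∈ Dfin L x₀, φ (g * u) = ∑ k ∈ E, φ k :=
    (Finset.sum_image (fun a _ b _ h => by simpa using h)).symm
  have hout : ∀ k : K, φ ((QuotientGroup.mk k : K ⧸ L)).out = φ k := by
    intro k
    have e1 : (QuotientGroup.mk ((QuotientGroup.mk k : K ⧸ L)).out : K ⧸ L)
        = QuotientGroup.mk k := Quotient.out_eq _
    have e2 : k⁻¹ * ((QuotientGroup.mk k : K ⧸ L)).out ∈ L := QuotientGroup.eq.mp e1.symm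
    have e3 : ((QuotientGroup.mk k : K ⧸ L)).out
        = k * (k⁻¹ * ((QuotientGroup.mk k : K ⧸ L)).out) := by group
    rw [e3, hφ _ _ e2]
  have h2 : ∑ k ∈ E, φ k
      = ∑ k ∈ E, (fun c : K ⧸ L => φ c.out) (QuotientGroup.mk k) :=
    Finset.sum_congr rfl (fun k _ => (hout k).symm)
  have himg : E.image (QuotientGroup.mk : K → K ⧸ L)
      = Finset.univ.filter (fun c : K ⧸ L => g⁻¹ * c.out ∈ dcoset K L x₀) := by
    ext c
    simp only [Finset.mem_image, Finset.mem_filter, Finset.mem_univ, true_and]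
    constructor
    · rintro ⟨k, hk, rfl⟩
      have hk' : g⁻¹ * k ∈ Dfin L x₀ := (mem_E_iff (L := L) (x₀ := x₀)).mp hk
      have e1 : (QuotientGroup.mk ((QuotientGroup.mk k : K ⧸ L)).out : K ⧸ L)
          = QuotientGroup.mk k := Quotient.out_eq _
      have e2 : k⁻¹ * ((QuotientGroup.mk k : K ⧸ L)).out ∈ L := QuotientGroup.eq.mp e1.symm
      have e3 : g⁻¹ * ((QuotientGroup.mk k : K ⧸ L)).out
          = (g⁻¹ * k) * (k⁻¹ * ((QuotientGroup.mk k : K ⧸ L)).out) := by group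
      rw [e3]
      exact (mem_Dfin L x₀).mp (Dfin_rstable L x₀ hk' e2)
    · intro hc
      refine ⟨c.out, (mem_E_iff (L := L) (x₀ := x₀)).mpr ((mem_Dfin L x₀).mpr hc), ?_⟩
      exact Quotient.out_eq c
  have hfib : ∀ c ∈ Finset.univ.filter (fun c : K ⧸ L => g⁻¹ * c.out ∈ dcoset K L x₀),
      (E.filter (fun k => (QuotientGroup.mk k : K ⧸ L) = c)).card = Fintype.card L := by
    intro c hc
    rw [Finset.mem_filter] at hc
    have hc' := hc.2
    have hfeq : E.filter (fun k => (QuotientGroup.mk k : K ⧸ L) = c)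
        = Finset.image (fun l : L => c.out * (l : K)) Finset.univ := by
      ext k
      simp only [Finset.mem_filter, Finset.mem_image, Finset.mem_univ, true_and]
      constructor
      · rintro ⟨hkE, hkc⟩
        have e1 : (QuotientGroup.mk (c.out) : K ⧸ L) = c := Quotient.out_eq c
        have e2 : c.out⁻¹ * k ∈ L := QuotientGroup.eq.mp (e1.trans hkc.symm)
        exact ⟨⟨c.out⁻¹ * k, e2⟩, by group⟩
      · rintro ⟨l, rfl⟩
        constructor
        · apply (mem_E_iff (L := L) (x₀ := x₀)).mpr
          have : g⁻¹ * (c.out * (l : K)) = (g⁻¹ * c.out) * (l : K) := by group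
          rw [this]
          exact Dfin_rstable L x₀ ((mem_Dfin L x₀).mpr hc') l.2
        · have e1 : (QuotientGroup.mk (c.out) : K ⧸ L) = c := Quotient.out_eq c
          have e2 : (QuotientGroup.mk (c.out * (l : K)) : K ⧸ L)
              = (QuotientGroup.mk (c.out) : K ⧸ L) := by
            apply QuotientGroup.eq.mpr
            have e3 : (c.out * (l : K))⁻¹ * c.out = (l : K)⁻¹ := by group
            rw [e3]; exact L.inv_mem l.2
          rw [e2, e1]
    rw [hfeq, Finset.card_image_of_injective _
      (fun a b hab => Subtype.ext (mul_left_cancel hab)), Finset.card_univ]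
  rw [h1, h2, Finset.sum_comp (fun c : K ⧸ L => φ c.out) (QuotientGroup.mk : K → K ⧸ L),
    himg, Finset.mul_sum]
  exact Finset.sum_congr rfl (fun c hc => by rw [hfib c hc, nsmul_eq_mul])

include hm in
lemma coset_sum_zsf {ω : K → ℂ} (hz : IsZSF K L ω) (g : K) :
    ∑ c ∈ Finset.univ.filter
        (fun c : K ⧸ L => g⁻¹ * c.out ∈ dcoset K L x₀), ω c.out
      = (m : ℂ) * (ω g * ω x₀) := by
  have hc : (Fintype.card L : ℂ) ≠ 0 := Nat.cast_ne_zero.mpr Fintype.card_ne_zero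
  apply mul_left_cancel₀ hc
  rw [coset_sum (L := L) (x₀ := x₀) ω (fun k l hl => zsf_right hz hl) g,
    sum_Dfin_zsf hm hz g]
  ring

include hm in
lemma coset_card (g : K) :
    ((Finset.univ.filter
        (fun c : K ⧸ L => g⁻¹ * c.out ∈ dcoset K L x₀)).card : ℂ) = (m : ℂ) := by
  have hc : (Fintype.card L : ℂ) ≠ 0 := Nat.cast_ne_zero.mpr Fintype.card_ne_zero
  apply mul_left_cancel₀ hc
  have h1 := coset_sum (L := L) (x₀ := x₀) (fun _ => (1 : ℂ)) (fun _ _ _ => rfl) g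
  simp only [Finset.sum_const, nsmul_eq_mul, mul_one] at h1
  rw [mul_comm ((Fintype.card L : ℂ)) (m : ℂ), ← mul_one ((m : ℂ) * (Fintype.card L : ℂ))]
  rw [h1]
  have h2 : ((Dfin L x₀).card : ℂ) = (m : ℂ) * (Fintype.card L : ℂ) := by
    rw [Dfin_card L x₀ hm]; push_cast; ring
  rw [h2]; ring

end Key
section Step
variable {K : Type} [Group K] [Fintype K] {L : Subgroup K} {x₀ : K} {m : ℕ}

lemma one_not_dcoset (hx₀ : x₀ ∉ L) : (1 : K) ∉ dcoset K L x₀ := by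
  rintro ⟨a, ha, b, hb, h⟩
  have h2 : x₀ = a⁻¹ * 1 * b⁻¹ := by rw [h]; group
  have h3 : a⁻¹ * 1 * b⁻¹ ∈ L := by
    simpa using L.mul_mem (L.inv_mem ha) (L.inv_mem hb)
  exact hx₀ (h2 ▸ h3)

lemma self_not_cond (hx₀ : x₀ ∉ L) (d : K ⧸ L) : ¬ (d.out⁻¹ * d.out ∈ dcoset K L x₀) := by
  rw [inv_mul_cancel]
  exact one_not_dcoset hx₀

lemma step_sum (hm : m * Nat.card L = Nat.card (dcoset K L x₀)) (hx₀ : x₀ ∉ L)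
    {ω : K → ℂ} (hz : IsZSF K L ω)
    (n : ℕ) (hn : 0 < n) (p : ℝ) (T : Finset (Fin n)) (x : Fin n → K ⧸ L) :
    ∑ y : Fin n → K ⧸ L, (step K L x₀ n m p x y : ℂ) * ∏ j ∈ T, ω ((y j).out)
      = (1 - (T.card : ℂ) * m * (p / n) * (1 - ω x₀)) * ∏ j ∈ T, ω ((x j).out) := by
  classical
  set F : (Fin n → K ⧸ L) → ℂ := fun y => ∏ j ∈ T, ω ((y j).out) with hF
  set Adj : (Fin n → K ⧸ L) → Prop := fun y => ∃ j : Fin n, (∀ i : Fin n, i ≠ j → x i = y i) ∧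
      (x j).out⁻¹ * (y j).out ∈ dcoset K L x₀ with hAdj
  have hsplit : ∑ y : Fin n → K ⧸ L, (step K L x₀ n m p x y : ℂ) * F y
      = (step K L x₀ n m p x x : ℂ) * F x
        + ∑ y ∈ Finset.univ.erase x, (step K L x₀ n m p x y : ℂ) * F y :=
    (Finset.add_sum_erase _ _ (Finset.mem_univ x)).symm
  have hxx : (step K L x₀ n m p x x : ℂ) = 1 - (m : ℂ) * p := by
    simp [step]
  have hterm : ∀ y ∈ Finset.univ.erase x, (step K L x₀ n m p x y : ℂ) * F y
      = if Adj y then ((p / n : ℝ) : ℂ) * F y else 0 := by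
    intro y hy
    have hne : x ≠ y := fun h => (Finset.mem_erase.mp hy).1 h.symm
    rw [step, if_neg hne]
    split_ifs with h
    · rfl
    · simp
  rw [hsplit, hxx, Finset.sum_congr rfl hterm, ← Finset.sum_filter]
  -- reindex the adjacent sum by (coordinate, new coset)
  set B : Finset ((_ : Fin n) × (K ⧸ L)) := Finset.univ.sigma
    (fun j : Fin n => Finset.univ.filter
      (fun c : K ⧸ L => (x j).out⁻¹ * c.out ∈ dcoset K L x₀)) with hB
  have hreindex : ∑ y ∈ (Finset.univ.erase x).filter Adj, ((p / n : ℝ) : ℂ) * F y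
      = ∑ q ∈ B, ((p / n : ℝ) : ℂ) * F (Function.update x q.1 q.2) := by
    apply Finset.sum_nbij'
      (i := fun y => if h : Adj y then ⟨Classical.choose h, y (Classical.choose h)⟩
        else ⟨⟨0, hn⟩, y ⟨0, hn⟩⟩)
      (j := fun q => Function.update x q.1 q.2)
    · intro y hy
      rw [Finset.mem_filter] at hy
      have h := hy.2
      rw [dif_pos h]
      have hspec := Classical.choose_spec h
      simp only [hB, Finset.mem_sigma, Finset.mem_univ, Finset.mem_filter, true_and]
      exact hspec.2
    · intro q hq
      simp only [hB, Finset.mem_sigma, Finset.mem_univ, Finset.mem_filter, true_and] at hq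
      rw [Finset.mem_filter]
      have hne : q.2 ≠ x q.1 := by
        intro h; rw [h] at hq; exact self_not_cond hx₀ (x q.1) hq
      constructor
      · apply Finset.mem_erase.mpr
        refine ⟨?_, Finset.mem_univ _⟩
        intro h
        apply hne
        have := congrFun h q.1
        rwa [Function.update_self] at this
      · exact ⟨q.1, fun i hi => (Function.update_of_ne hi _ _).symm, by
          rwa [Function.update_self]⟩
    · intro y hy
      rw [Finset.mem_filter] at hy
      have h := hy.2
      rw [dif_pos h]
      have hspec := Classical.choose_spec h
      funext i
      by_cases hi : i = Classical.choose h
      · rw [hi, Function.update_self]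
      · rw [Function.update_of_ne hi, hspec.1 i hi]
    · intro q hq
      simp only [hB, Finset.mem_sigma, Finset.mem_univ, Finset.mem_filter, true_and] at hq
      have hAdjq : Adj (Function.update x q.1 q.2) :=
        ⟨q.1, fun i hi => (Function.update_of_ne hi _ _).symm, by
          rwa [Function.update_self]⟩
      rw [dif_pos hAdjq]
      have hspec := Classical.choose_spec hAdjq
      have hj : Classical.choose hAdjq = q.1 := by
        by_contra hne
        have h1 : x q.1 = Function.update x q.1 q.2 q.1 :=
          hspec.1 q.1 (fun h => hne h.symm)
        rw [Function.update_self] at h1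
        rw [← h1] at hq
        exact self_not_cond hx₀ (x q.1) hq
      refine Sigma.ext hj ?_
      rw [hj]
      simp [Function.update_self]
    · intro y hy
      rw [Finset.mem_filter] at hy
      have h := hy.2
      rw [dif_pos h]
      have hspec := Classical.choose_spec h
      have : Function.update x (Classical.choose h) (y (Classical.choose h)) = y := by
        funext i
        by_cases hi : i = Classical.choose h
        · rw [hi, Function.update_self]
        · rw [Function.update_of_ne hi, hspec.1 i hi]
      rw [this]
  rw [hreindex, Finset.sum_sigma]
  have hinner : ∀ j : Fin n,
      (∑ c ∈ Finset.univ.filter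
        (fun c : K ⧸ L => (x j).out⁻¹ * c.out ∈ dcoset K L x₀),
        ((p / n : ℝ) : ℂ) * F (Function.update x j c))
      = if j ∈ T then ((p / n : ℝ) : ℂ) * (m : ℂ) * ω x₀ * F x
        else ((p / n : ℝ) : ℂ) * (m : ℂ) * F x := by
    intro j
    by_cases hjT : j ∈ T
    · have hFu : ∀ c : K ⧸ L, F (Function.update x j c)
          = ω c.out * ∏ i ∈ T.erase j, ω ((x i).out) := by
        intro c
        show (∏ i ∈ T, ω ((Function.update x j c i).out)) = _
        rw [← Finset.mul_prod_erase T _ hjT, Function.update_self]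
        congr 1
        exact Finset.prod_congr rfl (fun i hi =>
          by rw [Function.update_of_ne (Finset.mem_erase.mp hi).1])
      have hFx : ω ((x j).out) * ∏ i ∈ T.erase j, ω ((x i).out) = F x :=
        Finset.mul_prod_erase T (fun i => ω ((x i).out)) hjT
      rw [if_pos hjT, Finset.sum_congr rfl (fun c _ => by rw [hFu c]),
        ← Finset.mul_sum, ← Finset.sum_mul, coset_sum_zsf hm hz ((x j).out), ← hFx]
      ring
    · have hFu : ∀ c : K ⧸ L, F (Function.update x j c) = F x := by
        intro c
        refine Finset.prod_congr rfl (fun i hi => ?_)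
        rw [Function.update_of_ne (fun h => hjT (by rw [← h]; exact hi))]
      rw [if_neg hjT, Finset.sum_congr rfl (fun c _ => by rw [hFu c]),
        Finset.sum_const, nsmul_eq_mul, coset_card hm ((x j).out), ← mul_assoc,
        mul_comm ((m : ℂ)) (((p / n : ℝ) : ℂ))]
  rw [Finset.sum_congr rfl (fun j _ => hinner j), Finset.sum_ite, Finset.sum_const,
    Finset.sum_const]
  have e1 : Finset.univ.filter (fun j : Fin n => j ∈ T) = T := by ext j; simp
  have e2 : Finset.univ.filter (fun j : Fin n => ¬ j ∈ T) = Finset.univ \ T := by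
    ext j; simp
  have hTn : T.card ≤ n := by
    simpa using Finset.card_le_univ T
  have e3 : (Finset.univ \ T).card = n - T.card := by
    rw [Finset.card_sdiff_of_subset (Finset.subset_univ T), Finset.card_univ, Fintype.card_fin]
  rw [e1, e2, e3, nsmul_eq_mul, nsmul_eq_mul]
  have hFx : F x = ∏ j ∈ T, ω ((x j).out) := rfl
  rw [hFx]
  have hn' : (n : ℂ) ≠ 0 := Nat.cast_ne_zero.mpr hn.ne'
  push_cast [hTn]
  field_simp
  ring

end Step
section NStep
variable {K : Type} [Group K] [Fintype K] {L : Subgroup K} {x₀ : K} {m : ℕ}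

lemma pow_step_sum (hm : m * Nat.card L = Nat.card (dcoset K L x₀)) (hx₀ : x₀ ∉ L)
    {ω : K → ℂ} (hz : IsZSF K L ω)
    (n : ℕ) (hn : 0 < n) (p : ℝ) (T : Finset (Fin n)) (N : ℕ) (x : Fin n → K ⧸ L) :
    ∑ y : Fin n → K ⧸ L, (PmatC K L x₀ n m p ^ N) x y * ∏ j ∈ T, ω ((y j).out)
      = (1 - (T.card : ℂ) * m * (p / n) * (1 - ω x₀)) ^ N * ∏ j ∈ T, ω ((x j).out) := by
  set lam : ℂ := 1 - (T.card : ℂ) * m * (p / n) * (1 - ω x₀) with hlam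
  set F : (Fin n → K ⧸ L) → ℂ := fun y => ∏ j ∈ T, ω ((y j).out) with hFdef
  have hone : ∀ z : Fin n → K ⧸ L,
      ∑ y : Fin n → K ⧸ L, PmatC K L x₀ n m p z y * F y = lam * F z := by
    intro z
    have h := step_sum hm hx₀ hz n hn p T z
    have hPC : ∀ w, PmatC K L x₀ n m p z w = ((step K L x₀ n m p z w : ℝ) : ℂ) :=
      fun _ => rfl
    rw [Finset.sum_congr rfl (fun y _ => by rw [hPC y])]
    exact h
  induction N generalizing x with
  | zero =>
    simp only [pow_zero, Matrix.one_apply, ite_mul, one_mul, zero_mul]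
    rw [Finset.sum_ite_eq]
    simp
  | succ N ih =>
    rw [pow_succ]
    calc ∑ y : Fin n → K ⧸ L, (PmatC K L x₀ n m p ^ N * PmatC K L x₀ n m p) x y * F y
        = ∑ y : Fin n → K ⧸ L, ∑ z : Fin n → K ⧸ L,
            (PmatC K L x₀ n m p ^ N) x z * (PmatC K L x₀ n m p z y * F y) := by
          refine Finset.sum_congr rfl (fun y _ => ?_)
          rw [Matrix.mul_apply, Finset.sum_mul]
          exact Finset.sum_congr rfl (fun z _ => by ring)
      _ = ∑ z : Fin n → K ⧸ L, ∑ y : Fin n → K ⧸ L,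
            (PmatC K L x₀ n m p ^ N) x z * (PmatC K L x₀ n m p z y * F y) :=
          Finset.sum_comm
      _ = ∑ z : Fin n → K ⧸ L, (PmatC K L x₀ n m p ^ N) x z * (lam * F z) := by
          refine Finset.sum_congr rfl (fun z _ => ?_)
          rw [← Finset.mul_sum, hone z]
      _ = lam * ∑ z : Fin n → K ⧸ L, (PmatC K L x₀ n m p ^ N) x z * F z := by
          rw [Finset.mul_sum]
          exact Finset.sum_congr rfl (fun z _ => by ring)
      _ = lam ^ (N + 1) * F x := by rw [ih x]; ring

lemma step_nonneg (hp : 0 ≤ p) (hmp : (m : ℝ) * p ≤ 1) (n : ℕ) (x y : Fin n → K ⧸ L) :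
    0 ≤ step K L x₀ n m p x y := by
  unfold step
  split_ifs
  · linarith
  · positivity
  · exact le_refl 0

lemma PmatR_pow_nonneg (hp : 0 ≤ p) (hmp : (m : ℝ) * p ≤ 1) (n N : ℕ)
    (x y : Fin n → K ⧸ L) : 0 ≤ (PmatR K L x₀ n m p ^ N) x y := by
  induction N generalizing x y with
  | zero => simp only [pow_zero, Matrix.one_apply]; split_ifs <;> norm_num
  | succ N ih =>
    rw [pow_succ, Matrix.mul_apply]
    exact Finset.sum_nonneg (fun z _ => mul_nonneg (ih x z) (step_nonneg hp hmp n z y))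

lemma PmatC_pow_eq (n N : ℕ) (p : ℝ) (x y : Fin n → K ⧸ L) :
    (PmatC K L x₀ n m p ^ N) x y = (((PmatR K L x₀ n m p ^ N) x y : ℝ) : ℂ) := by
  have h : PmatC K L x₀ n m p = Complex.ofRealHom.mapMatrix (PmatR K L x₀ n m p) := by
    ext a b; rfl
  rw [h, ← map_pow, RingHom.mapMatrix_apply, Matrix.map_apply]
  rfl

end NStep

set_option maxHeartbeats 2000000 in
/-- Variance bound under the `N`-step distribution (for `n ≥ 4`):
`V_{ν_N}(Q) = E_{ν_N}(Q²) - E_{ν_N}(Q)² ≤ 1/n` for every `N`. -/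
theorem variance_of_Q_nstep_le
    (K : Type) [Group K] [Fintype K] (L : Subgroup K)
    (hGP : IsGelfandPair K L)
    (s : ℕ) [NeZero s] (hs : 2 ≤ s)
    (ω : Fin s → K → ℂ)
    (hzsf : ∀ i, IsZSF K L (ω i))
    (hω0 : ∀ g : K, ω 0 g = 1)
    (hinj : Function.Injective ω)
    (hcomplete : s = Nat.card (DoubleCoset.Quotient (L : Set K) (L : Set K)))
    (x₀ : K) (hx₀ : x₀ ∉ L)
    (m : ℕ) (hm : m * Nat.card L = Nat.card (dcoset K L x₀))
    (hreal : ∀ i, (ω i x₀).im = 0)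
    (M : ℝ)
    (hM : IsGreatest (Set.range fun i : {i : Fin s // i ≠ 0} => (ω (i : Fin s) x₀).re) M)
    (hM1 : M < 1)
    (p : ℝ) (hp0 : 0 < m * p) (hp2 : m * p ≤ 1 / 2)
    (a : Fin s → ℂ)
    (ha : ∀ g : K, (ω ⟨1, hs⟩ g) ^ 2 = ∑ j : Fin s, a j * ω j g)
    (n : ℕ) (hn : 4 ≤ n) (N : ℕ) :
    ((∑ x : Fin n → K ⧸ L,
          (PmatC K L x₀ n m p ^ N) (eQ K L n) x *
            ((n : ℂ)⁻¹ * ∑ j : Fin n, ω ⟨1, hs⟩ (x j).out) ^ 2) -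
        (∑ x : Fin n → K ⧸ L,
          (PmatC K L x₀ n m p ^ N) (eQ K L n) x *
            ((n : ℂ)⁻¹ * ∑ j : Fin n, ω ⟨1, hs⟩ (x j).out)) ^ 2).re ≤
      1 / n := by
  classical
  have hn0 : 0 < n := by omega
  have hnC : (n : ℂ) ≠ 0 := Nat.cast_ne_zero.mpr hn0.ne'
  have hnR : (0 : ℝ) < n := by exact_mod_cast hn0
  set ω₁ : K → ℂ := ω ⟨1, hs⟩ with hω₁
  have hz : IsZSF K L ω₁ := hzsf ⟨1, hs⟩
  set wr : ℝ := (ω₁ x₀).re with hwr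
  have hx : ω₁ x₀ = (wr : ℂ) := Complex.ext rfl
    (by rw [Complex.ofReal_im, hω₁]; exact hreal ⟨1, hs⟩)
  have hwr1 : |wr| ≤ 1 := le_trans (Complex.abs_re_le_norm _) (zsf_abs_le_one hz x₀)
  have hp' : 0 < p := by
    by_contra h
    push_neg at h
    have : (m : ℝ) * p ≤ 0 := mul_nonpos_of_nonneg_of_nonpos (Nat.cast_nonneg m) h
    linarith
  -- real eigenvalue quantities
  set u : ℝ := (m : ℝ) * p * (1 - wr) / n with hu
  set r : ℝ := 1 - u with hr
  set ρ : ℝ := 1 - 2 * u with hρ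
  have hu0 : 0 ≤ u := by
    apply div_nonneg _ hnR.le
    apply mul_nonneg (le_of_lt hp0)
    nlinarith [abs_le.mp hwr1]
  have hu14 : u ≤ 1 / 4 := by
    have h1 : (m : ℝ) * p * (1 - wr) ≤ 1 := by nlinarith [abs_le.mp hwr1]
    have h2 : u ≤ 1 / n := by
      rw [hu, div_le_div_iff₀ hnR hnR]
      nlinarith
    have h3 : (1 : ℝ) / n ≤ 1 / 4 := by
      apply div_le_div_of_nonneg_left one_pos.le (by norm_num)
      exact_mod_cast hn
    linarith
  have hρ0 : 0 ≤ ρ := by rw [hρ]; linarith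
  have hρr : ρ ≤ r ^ 2 := by rw [hρ, hr]; nlinarith
  have hρN : ρ ^ N ≤ (r ^ N) ^ 2 := by
    calc ρ ^ N ≤ (r ^ 2) ^ N := pow_le_pow_left₀ hρ0 hρr N
      _ = (r ^ N) ^ 2 := by rw [← pow_mul, ← pow_mul, Nat.mul_comm]
  -- eigen identities
  set A : (Fin n → K ⧸ L) → ℂ := (PmatC K L x₀ n m p ^ N) (eQ K L n) with hA
  have hgen : ∀ T : Finset (Fin n),
      ∑ x : Fin n → K ⧸ L, A x * ∏ j ∈ T, ω₁ ((x j).out)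
        = (1 - (T.card : ℂ) * m * (p / n) * (1 - ω₁ x₀)) ^ N := by
    intro T
    have h0 := pow_step_sum hm hx₀ hz n hn0 p T N (eQ K L n)
    have h1 : ∀ j : Fin n, ω₁ (((eQ K L n) j).out) = 1 := by
      intro j
      show ω₁ (((1 : K) : K ⧸ L)).out = 1
      rw [zsf_out hz 1, hz.1]
    rw [Finset.prod_congr rfl (fun j _ => h1 j), Finset.prod_const_one, mul_one] at h0
    exact h0
  have hsum1 : ∑ x : Fin n → K ⧸ L, A x = 1 := by
    have h := hgen ∅
    simpa using h
  have hrc : (1 - ((1 : ℕ) : ℂ) * m * (p / n) * (1 - ω₁ x₀)) = ((r : ℝ) : ℂ) := by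
    rw [hx, hr, hu]; push_cast; ring
  have hpc : (1 - ((2 : ℕ) : ℂ) * m * (p / n) * (1 - ω₁ x₀)) = ((ρ : ℝ) : ℂ) := by
    rw [hx, hρ, hu]; push_cast; ring
  have hE1 : ∀ j : Fin n, ∑ x : Fin n → K ⧸ L, A x * ω₁ ((x j).out)
      = ((r : ℝ) : ℂ) ^ N := by
    intro j
    have h := hgen {j}
    rw [Finset.card_singleton] at h
    rw [Finset.sum_congr rfl (fun x _ => by rw [← Finset.prod_singleton
      (f := fun k => ω₁ ((x k).out)) (a := j)]), h, hrc]
  have hE2 : ∀ j k : Fin n, j ≠ k →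
      ∑ x : Fin n → K ⧸ L, A x * (ω₁ ((x j).out) * ω₁ ((x k).out))
        = ((ρ : ℝ) : ℂ) ^ N := by
    intro j k hjk
    have h := hgen {j, k}
    rw [Finset.card_pair hjk] at h
    rw [Finset.sum_congr rfl (fun x _ => by rw [← Finset.prod_pair
      (f := fun i => ω₁ ((x i).out)) hjk]), h, hpc]
  -- expectation of Q
  have hS1 : ∑ x : Fin n → K ⧸ L, A x * ((n : ℂ)⁻¹ * ∑ j : Fin n, ω₁ ((x j).out))
      = ((r : ℝ) : ℂ) ^ N := by
    have h1 : ∀ x, A x * ((n : ℂ)⁻¹ * ∑ j : Fin n, ω₁ ((x j).out))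
        = ∑ j : Fin n, (n : ℂ)⁻¹ * (A x * ω₁ ((x j).out)) := by
      intro x
      rw [Finset.mul_sum, Finset.mul_sum]
      exact Finset.sum_congr rfl (fun j _ => by ring)
    rw [Finset.sum_congr rfl (fun x _ => h1 x), Finset.sum_comm]
    rw [Finset.sum_congr rfl (fun j _ => by rw [← Finset.mul_sum, hE1 j])]
    rw [Finset.sum_const, Finset.card_univ, Fintype.card_fin, nsmul_eq_mul]
    field_simp
  -- second moment decomposition
  set G : Fin n → Fin n → ℂ := fun j k =>
    ∑ x : Fin n → K ⧸ L, A x * (ω₁ ((x j).out) * ω₁ ((x k).out)) with hG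
  have hS2 : ∑ x : Fin n → K ⧸ L, A x * ((n : ℂ)⁻¹ * ∑ j : Fin n, ω₁ ((x j).out)) ^ 2
      = ((n : ℂ)⁻¹) ^ 2 * ∑ j : Fin n, ∑ k : Fin n, G j k := by
    have h1 : ∀ x, A x * ((n : ℂ)⁻¹ * ∑ j : Fin n, ω₁ ((x j).out)) ^ 2
        = ∑ j : Fin n, ∑ k : Fin n,
            ((n : ℂ)⁻¹) ^ 2 * (A x * (ω₁ ((x j).out) * ω₁ ((x k).out))) := by
      intro x
      rw [mul_pow, sq (∑ j : Fin n, ω₁ ((x j).out)), Finset.sum_mul_sum,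
        Finset.mul_sum, Finset.mul_sum]
      refine Finset.sum_congr rfl (fun j _ => ?_)
      rw [Finset.mul_sum, Finset.mul_sum]
      exact Finset.sum_congr rfl (fun k _ => by ring)
    rw [Finset.sum_congr rfl (fun x _ => h1 x), Finset.sum_comm, Finset.mul_sum]
    refine Finset.sum_congr rfl (fun j _ => ?_)
    rw [Finset.mul_sum]
    refine Finset.sum_comm.trans (Finset.sum_congr rfl (fun k _ => ?_))
    rw [← Finset.mul_sum, hG]
  have hsplit : ∑ j : Fin n, ∑ k : Fin n, G j k
      = (∑ j : Fin n, G j j) + (n : ℂ) * ((n : ℂ) - 1) * ((ρ : ℝ) : ℂ) ^ N := by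
    have h1 : ∀ j : Fin n, ∑ k : Fin n, G j k
        = G j j + ((n : ℂ) - 1) * ((ρ : ℝ) : ℂ) ^ N := by
      intro j
      rw [← Finset.add_sum_erase _ _ (Finset.mem_univ j)]
      congr 1
      rw [Finset.sum_congr rfl (fun k hk =>
        hE2 j k (fun h => (Finset.mem_erase.mp hk).1 h.symm)),
        Finset.sum_const, Finset.card_erase_of_mem (Finset.mem_univ j),
        Finset.card_univ, Fintype.card_fin, nsmul_eq_mul]
      push_cast [hn0]
      ring
    rw [Finset.sum_congr rfl (fun j _ => h1 j), Finset.sum_add_distrib,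
      Finset.sum_const, Finset.card_univ, Fintype.card_fin, nsmul_eq_mul]
    ring
  set Dg : ℂ := ∑ j : Fin n, G j j with hDg
  have key : (∑ x : Fin n → K ⧸ L, A x * ((n : ℂ)⁻¹ * ∑ j : Fin n, ω₁ ((x j).out)) ^ 2)
      - (∑ x : Fin n → K ⧸ L, A x * ((n : ℂ)⁻¹ * ∑ j : Fin n, ω₁ ((x j).out))) ^ 2
      = ((n : ℂ)⁻¹) ^ 2 * Dg
        + (((((n : ℝ)⁻¹) ^ 2 * ((n : ℝ) * ((n : ℝ) - 1)) * ρ ^ N - (r ^ N) ^ 2 : ℝ)) : ℂ) := by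
    rw [hS2, hsplit, hS1]
    push_cast
    ring
  rw [key, Complex.add_re]
  have hre1 : (((n : ℂ)⁻¹) ^ 2 * Dg).re = ((n : ℝ)⁻¹) ^ 2 * Dg.re := by
    rw [show ((n : ℂ)⁻¹) ^ 2 = (((((n : ℝ)⁻¹) ^ 2 : ℝ)) : ℂ) by push_cast; ring,
      Complex.re_ofReal_mul]
  rw [hre1, Complex.ofReal_re]
  -- the distribution is a genuine probability distribution
  set ν : (Fin n → K ⧸ L) → ℝ := (PmatR K L x₀ n m p ^ N) (eQ K L n) with hνdef
  have hν : ∀ x, A x = ((ν x : ℝ) : ℂ) := fun x => PmatC_pow_eq n N p _ x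
  have hν0 : ∀ x, 0 ≤ ν x := fun x => PmatR_pow_nonneg hp'.le (by linarith) n N _ x
  have hνsum : ∑ x : Fin n → K ⧸ L, ν x = 1 := by
    have h2 := hsum1
    rw [Finset.sum_congr rfl (fun x _ => hν x)] at h2
    exact_mod_cast h2
  -- the diagonal term is bounded by n
  have hterm : ∀ (j : Fin n) (x : Fin n → K ⧸ L),
      (A x * (ω₁ ((x j).out) * ω₁ ((x j).out))).re ≤ ν x := by
    intro j x
    rw [hν x, Complex.re_ofReal_mul]
    have habs : (ω₁ ((x j).out) * ω₁ ((x j).out)).re ≤ 1 := by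
      refine le_trans (Complex.re_le_norm _) ?_
      rw [norm_mul]
      have h3 := zsf_abs_le_one hz ((x j).out)
      nlinarith [norm_nonneg (ω₁ ((x j).out))]
    exact mul_le_of_le_one_right (hν0 x) habs
  have hGd : ∀ j : Fin n, (G j j).re ≤ 1 := by
    intro j
    have hGjj : (G j j).re
        = ∑ x : Fin n → K ⧸ L, (A x * (ω₁ ((x j).out) * ω₁ ((x j).out))).re := by
      rw [show G j j = ∑ x : Fin n → K ⧸ L, A x * (ω₁ ((x j).out) * ω₁ ((x j).out))
        from rfl, Complex.re_sum]
    rw [hGjj]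
    calc ∑ x : Fin n → K ⧸ L, (A x * (ω₁ ((x j).out) * ω₁ ((x j).out))).re
        ≤ ∑ x : Fin n → K ⧸ L, ν x := Finset.sum_le_sum (fun x _ => hterm j x)
      _ = 1 := hνsum
  have hDgre : Dg.re ≤ n := by
    rw [hDg, Complex.re_sum]
    calc ∑ j : Fin n, (G j j).re ≤ ∑ j : Fin n, (1 : ℝ) :=
          Finset.sum_le_sum (fun j _ => hGd j)
      _ = n := by simp
  clear_value A G Dg ν ω₁ wr u r ρ
  -- final real arithmetic
  have e1 : ((n : ℝ)⁻¹) ^ 2 * ((n : ℝ) * ((n : ℝ) - 1)) = 1 - 1 / n := by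
    field_simp
  rw [e1]
  have e3 : ((n : ℝ)⁻¹) ^ 2 * Dg.re ≤ 1 / (n : ℝ) := by
    calc ((n : ℝ)⁻¹) ^ 2 * Dg.re ≤ ((n : ℝ)⁻¹) ^ 2 * (n : ℝ) :=
          mul_le_mul_of_nonneg_left hDgre (by positivity)
      _ = 1 / (n : ℝ) := by field_simp
  have e4 : (1 - 1 / (n : ℝ)) * ρ ^ N ≤ (r ^ N) ^ 2 := by
    have h5 : (0 : ℝ) ≤ ρ ^ N := pow_nonneg hρ0 N
    have h7 : (1 - 1 / (n : ℝ)) ≤ 1 := by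
      have h6 : (0 : ℝ) < 1 / (n : ℝ) := by positivity
      linarith
    calc (1 - 1 / (n : ℝ)) * ρ ^ N ≤ 1 * ρ ^ N := mul_le_mul_of_nonneg_right h7 h5
      _ = ρ ^ N := one_mul _
      _ ≤ (r ^ N) ^ 2 := hρN
  generalize Dg.re = dgr at e3 ⊢
  linarith
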